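/- Let Z be a matrix on A⊗B⊗C⊗A'⊗B'⊗C'. If Z satisfies the three one-to-two no-signalling conditions (A↛BC), (B↛AC) and (C↛AB), then Z also satisfies the three two-to-one no-signalling conditions (BC↛A), (AB↛C) and (AC↛B). In particular, the conditions {A↛BC, B↛AC, C↛AB} establish full no-signalling among the three parties. -/
import Mathlib


open Matrix
open scoped ComplexOrder

variable {A B C A' B' C' : Type*}
variable [Fintype A] [Fintype B] [Fintype C] [Fintype A'] [Fintype B'] [Fintype C']
variable [DecidableEq A] [DecidableEq B] [DecidableEq C]

/-- No-signalling condition (A ↛ BC):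
`Tr_{A'} Z = (1_A/|A|) ⊗ Tr_{A A'} Z`, stated entrywise. -/
def NS_A_to_BC (Z : Matrix (A × B × C × A' × B' × C') (A × B × C × A' × B' × C') ℂ) : Prop :=
  ∀ (a a₁ : A) (b b₁ : B) (c c₁ : C) (b' b₁' : B') (c' c₁' : C'),
    (∑ x : A', Z (a, b, c, x, b', c') (a₁, b₁, c₁, x, b₁', c₁')) =
      (if a = a₁ then (Fintype.card A : ℂ)⁻¹ else 0) *
        ∑ y : A, ∑ x : A', Z (y, b, c, x, b', c') (y, b₁, c₁, x, b₁', c₁')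

/-- No-signalling condition (B ↛ AC):
`Tr_{B'} Z = (1_B/|B|) ⊗ Tr_{B B'} Z`, stated entrywise. -/
def NS_B_to_AC (Z : Matrix (A × B × C × A' × B' × C') (A × B × C × A' × B' × C') ℂ) : Prop :=
  ∀ (a a₁ : A) (b b₁ : B) (c c₁ : C) (a' a₁' : A') (c' c₁' : C'),
    (∑ y : B', Z (a, b, c, a', y, c') (a₁, b₁, c₁, a₁', y, c₁')) =
      (if b = b₁ then (Fintype.card B : ℂ)⁻¹ else 0) *
        ∑ β : B, ∑ y : B', Z (a, β, c, a', y, c') (a₁, β, c₁, a₁', y, c₁')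

/-- No-signalling condition (C ↛ AB):
`Tr_{C'} Z = (1_C/|C|) ⊗ Tr_{C C'} Z`, stated entrywise. -/
def NS_C_to_AB (Z : Matrix (A × B × C × A' × B' × C') (A × B × C × A' × B' × C') ℂ) : Prop :=
  ∀ (a a₁ : A) (b b₁ : B) (c c₁ : C) (a' a₁' : A') (b' b₁' : B'),
    (∑ z : C', Z (a, b, c, a', b', z) (a₁, b₁, c₁, a₁', b₁', z)) =
      (if c = c₁ then (Fintype.card C : ℂ)⁻¹ else 0) *
        ∑ γ : C, ∑ z : C', Z (a, b, γ, a', b', z) (a₁, b₁, γ, a₁', b₁', z)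

/-- No-signalling condition (BC ↛ A):
`Tr_{B'C'} Z = (1_{BC}/(|B||C|)) ⊗ Tr_{B C B' C'} Z`, stated entrywise. -/
def NS_BC_to_A (Z : Matrix (A × B × C × A' × B' × C') (A × B × C × A' × B' × C') ℂ) : Prop :=
  ∀ (a a₁ : A) (b b₁ : B) (c c₁ : C) (a' a₁' : A'),
    (∑ y : B', ∑ z : C', Z (a, b, c, a', y, z) (a₁, b₁, c₁, a₁', y, z)) =
      (if b = b₁ ∧ c = c₁ then ((Fintype.card B : ℂ) * (Fintype.card C : ℂ))⁻¹ else 0) *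
        ∑ β : B, ∑ γ : C, ∑ y : B', ∑ z : C',
          Z (a, β, γ, a', y, z) (a₁, β, γ, a₁', y, z)

/-- No-signalling condition (AB ↛ C):
`Tr_{A'B'} Z = (1_{AB}/(|A||B|)) ⊗ Tr_{A B A' B'} Z`, stated entrywise. -/
def NS_AB_to_C (Z : Matrix (A × B × C × A' × B' × C') (A × B × C × A' × B' × C') ℂ) : Prop :=
  ∀ (a a₁ : A) (b b₁ : B) (c c₁ : C) (c' c₁' : C'),
    (∑ x : A', ∑ y : B', Z (a, b, c, x, y, c') (a₁, b₁, c₁, x, y, c₁')) =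
      (if a = a₁ ∧ b = b₁ then ((Fintype.card A : ℂ) * (Fintype.card B : ℂ))⁻¹ else 0) *
        ∑ α : A, ∑ β : B, ∑ x : A', ∑ y : B',
          Z (α, β, c, x, y, c') (α, β, c₁, x, y, c₁')

/-- No-signalling condition (AC ↛ B):
`Tr_{A'C'} Z = (1_{AC}/(|A||C|)) ⊗ Tr_{A C A' C'} Z`, stated entrywise. -/
def NS_AC_to_B (Z : Matrix (A × B × C × A' × B' × C') (A × B × C × A' × B' × C') ℂ) : Prop :=
  ∀ (a a₁ : A) (b b₁ : B) (c c₁ : C) (b' b₁' : B'),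
    (∑ x : A', ∑ z : C', Z (a, b, c, x, b', z) (a₁, b₁, c₁, x, b₁', z)) =
      (if a = a₁ ∧ c = c₁ then ((Fintype.card A : ℂ) * (Fintype.card C : ℂ))⁻¹ else 0) *
        ∑ α : A, ∑ γ : C, ∑ x : A', ∑ z : C',
          Z (α, b, γ, x, b', z) (α, b₁, γ, x, b₁', z)


private lemma sum3_reorder {α β γ : Type*} [Fintype α] [Fintype β] [Fintype γ]
    (f : α → β → γ → ℂ) :
    ∑ a, ∑ b, ∑ c, f a b c = ∑ b, ∑ c, ∑ a, f a b c := by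
  rw [Finset.sum_comm]
  exact Finset.sum_congr rfl fun b _ => Finset.sum_comm

private lemma sum4_reorder {α β γ δ : Type*} [Fintype α] [Fintype β] [Fintype γ] [Fintype δ]
    (f : α → β → γ → δ → ℂ) :
    ∑ a, ∑ b, ∑ c, ∑ d, f a b c d = ∑ c, ∑ a, ∑ d, ∑ b, f a b c d := by
  have h1 : ∑ a, ∑ b, ∑ c, ∑ d, f a b c d = ∑ a, ∑ c, ∑ b, ∑ d, f a b c d :=
    Finset.sum_congr rfl fun a _ => Finset.sum_comm
  rw [h1, Finset.sum_comm]
  exact Finset.sum_congr rfl fun c _ => Finset.sum_congr rfl fun a _ => Finset.sum_comm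

/-- The three one-to-two no-signalling conditions imply the three two-to-one
no-signalling conditions; in particular they establish full no-signalling among
the three parties. -/
theorem one_to_two_NS_implies_two_to_one_NS
    (Z : Matrix (A × B × C × A' × B' × C') (A × B × C × A' × B' × C') ℂ)
    (hA : NS_A_to_BC Z) (hB : NS_B_to_AC Z) (hC : NS_C_to_AB Z) :
    NS_BC_to_A Z ∧ NS_AB_to_C Z ∧ NS_AC_to_B Z := by
  refine ⟨?_, ?_, ?_⟩
  · intro a a₁ b b₁ c c₁ a' a₁'
    simp_rw [fun y => hC a a₁ b b₁ c c₁ a' a₁' y y]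
    rw [← Finset.mul_sum, sum3_reorder]
    simp_rw [fun γ z => hB a a₁ b b₁ γ γ a' a₁' z z, ← Finset.mul_sum, ← mul_assoc]
    rw [sum4_reorder]
    congr 1
    by_cases hb : b = b₁ <;> by_cases hc : c = c₁ <;>
      simp [hb, hc, mul_inv, mul_comm]
  · intro a a₁ b b₁ c c₁ c' c₁'
    simp_rw [fun x => hB a a₁ b b₁ c c₁ x x c' c₁']
    rw [← Finset.mul_sum, sum3_reorder]
    simp_rw [fun β y => hA a a₁ β β c c₁ y y c' c₁', ← Finset.mul_sum, ← mul_assoc]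
    rw [sum4_reorder]
    congr 1
    by_cases ha : a = a₁ <;> by_cases hb : b = b₁ <;>
      simp [ha, hb, mul_inv, mul_comm]
  · intro a a₁ b b₁ c c₁ b' b₁'
    simp_rw [fun x => hC a a₁ b b₁ c c₁ x x b' b₁']
    rw [← Finset.mul_sum, sum3_reorder]
    simp_rw [fun γ z => hA a a₁ b b₁ γ γ b' b₁' z z, ← Finset.mul_sum, ← mul_assoc]
    rw [sum4_reorder]
    congr 1
    by_cases ha : a = a₁ <;> by_cases hc : c = c₁ <;>
      simp [ha, hc, mul_inv, mul_comm]
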